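/- Let N ≥ 3 and 1 ≤ k ≤ N−2 be integers and set m = N−k. Define V(y,z) = ‖y‖^{(2+k−N)/2} ( 1 + (−log‖y‖)^{−1} ) on Ω = {(y,z) ∈ ℝ^m × ℝ^k : 0 < ‖y‖ < 1}. Then V > 0 on Ω and at every point of Ω, −ΔV − ((N−k−2)/2)² ‖y‖^{−2} V = −2 ‖y‖^{−2} (−log‖y‖)^{−3} ‖y‖^{(2+k−N)/2} ≤ 0; that is, V is a subsolution of the critical Hardy operator on Ω. -/

import Mathlib

open MeasureTheory

/-- The Euclidean norm of the first `m` coordinates of `x ∈ ℝ^N`, i.e. `‖y‖`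
where `x = (y,z)` with `y ∈ ℝ^m` and `z ∈ ℝ^{N-m}`. -/
noncomputable def rhoY (m : ℕ) {N : ℕ} (x : EuclideanSpace ℝ (Fin N)) : ℝ :=
  Real.sqrt (∑ i : Fin N, if (i : ℕ) < m then x i ^ 2 else 0)

/-- The Euclidean Laplacian of `f : ℝ^n → ℝ` at `x`, as the trace of the second
derivative over the standard orthonormal basis. -/
noncomputable def lap {n : ℕ} (f : EuclideanSpace ℝ (Fin n) → ℝ)
    (x : EuclideanSpace ℝ (Fin n)) : ℝ :=
  ∑ i : Fin n, iteratedFDeriv ℝ 2 f x ![EuclideanSpace.single i 1, EuclideanSpace.single i 1]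

namespace CHSaux

/-- The squared partial norm. -/
noncomputable def sQ (m : ℕ) {N : ℕ} (x : EuclideanSpace ℝ (Fin N)) : ℝ :=
  ∑ i : Fin N, if (i : ℕ) < m then x i ^ 2 else 0

lemma rhoY_eq (m : ℕ) {N : ℕ} (x : EuclideanSpace ℝ (Fin N)) :
    rhoY m x = Real.sqrt (sQ m x) := rfl

lemma sQ_nonneg (m : ℕ) {N : ℕ} (x : EuclideanSpace ℝ (Fin N)) : 0 ≤ sQ m x :=
  Finset.sum_nonneg fun i _ => by split <;> positivity

lemma sQ_continuous (m : ℕ) {N : ℕ} : Continuous (sQ m (N := N)) := by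
  apply continuous_finset_sum
  intro i _
  by_cases h : (i : ℕ) < m
  · simp only [h, if_true]
    exact ((EuclideanSpace.proj (𝕜 := ℝ) i).continuous).pow 2
  · simp only [h, if_false]
    exact continuous_const

/-- The second-derivative bilinear map of `sQ`. -/
noncomputable def TT (m : ℕ) {N : ℕ} :
    EuclideanSpace ℝ (Fin N) →L[ℝ] EuclideanSpace ℝ (Fin N) →L[ℝ] ℝ :=
  ∑ i ∈ Finset.univ.filter (fun i : Fin N => (i : ℕ) < m),
    (((2 : ℝ) • EuclideanSpace.proj i).smulRight (EuclideanSpace.proj i))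

lemma hasFDerivAt_sQ (m : ℕ) {N : ℕ} (x : EuclideanSpace ℝ (Fin N)) :
    HasFDerivAt (sQ m) (TT m x) x := by
  have h1 : sQ (N := N) m = fun y => ∑ i ∈ Finset.univ.filter (fun i : Fin N => (i : ℕ) < m),
      (EuclideanSpace.proj (𝕜 := ℝ) i y) * (EuclideanSpace.proj (𝕜 := ℝ) i y) := by
    funext y
    rw [sQ, Finset.sum_filter]
    exact Finset.sum_congr rfl fun i _ => by split_ifs <;> simp [pow_two]
  have h2 : TT (N := N) m x = ∑ i ∈ Finset.univ.filter (fun i : Fin N => (i : ℕ) < m),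
      ((EuclideanSpace.proj (𝕜 := ℝ) i x) • EuclideanSpace.proj (𝕜 := ℝ) i
        + (EuclideanSpace.proj (𝕜 := ℝ) i x) • EuclideanSpace.proj (𝕜 := ℝ) i) := by
    rw [TT, ContinuousLinearMap.sum_apply]
    refine Finset.sum_congr rfl fun i _ => ?_
    ext v
    simp only [ContinuousLinearMap.smulRight_apply, ContinuousLinearMap.smul_apply,
      ContinuousLinearMap.add_apply, smul_eq_mul]
    ring
  rw [h1, h2]
  exact HasFDerivAt.fun_sum fun i _ =>
    ((EuclideanSpace.proj (𝕜 := ℝ) i).hasFDerivAt (x := x)).mul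
      ((EuclideanSpace.proj (𝕜 := ℝ) i).hasFDerivAt (x := x))

/-- `V` as a function of `t = ρ²`. -/
noncomputable def hh (b t : ℝ) : ℝ := t ^ b * (1 + (-(Real.log t / 2))⁻¹)

noncomputable def hh1 (b t : ℝ) : ℝ :=
  b * t ^ (b - 1) * (1 + (-(Real.log t / 2))⁻¹) + t ^ b * (2 / (t * Real.log t ^ 2))

noncomputable def hh2 (b t : ℝ) : ℝ :=
  b * (b - 1) * t ^ (b - 2) * (1 + (-(Real.log t / 2))⁻¹)
    + 2 * b * t ^ (b - 1) * (2 / (t * Real.log t ^ 2))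
    + t ^ b * (-(2 * (Real.log t ^ 2 + 2 * Real.log t)) / (t * Real.log t ^ 2) ^ 2)

lemma log_ne (t : ℝ) (ht : 0 < t) (ht1 : t < 1) : Real.log t ≠ 0 :=
  ne_of_lt (Real.log_neg ht ht1)

lemma hasDerivAt_hh (b t : ℝ) (ht : 0 < t) (ht1 : t < 1) :
    HasDerivAt (hh b) (hh1 b t) t := by
  have hL : Real.log t ≠ 0 := log_ne t ht ht1
  have hne : -(Real.log t / 2) ≠ 0 := by simp [hL]
  have hP : HasDerivAt (fun t : ℝ => 1 + (-(Real.log t / 2))⁻¹)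
      (-(-(t⁻¹ / 2)) / (-(Real.log t / 2)) ^ 2) t :=
    ((((Real.hasDerivAt_log ht.ne').div_const 2).neg).inv hne).const_add 1
  have hp : HasDerivAt (fun t : ℝ => t ^ b) (b * t ^ (b - 1)) t :=
    Real.hasDerivAt_rpow_const (Or.inl ht.ne')
  have this : HasDerivAt (fun t : ℝ => t ^ b * (1 + (-(Real.log t / 2))⁻¹)) _ t :=
    hp.fun_mul hP
  convert this using 1
  · rfl
  rw [hh1]
  field_simp

lemma hasDerivAt_hh1 (b t : ℝ) (ht : 0 < t) (ht1 : t < 1) :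
    HasDerivAt (hh1 b) (hh2 b t) t := by
  have hL : Real.log t ≠ 0 := log_ne t ht ht1
  have hne : -(Real.log t / 2) ≠ 0 := by simp [hL]
  have hP : HasDerivAt (fun t : ℝ => 1 + (-(Real.log t / 2))⁻¹)
      (-(-(t⁻¹ / 2)) / (-(Real.log t / 2)) ^ 2) t :=
    ((((Real.hasDerivAt_log ht.ne').div_const 2).neg).inv hne).const_add 1
  have hu : HasDerivAt (fun t : ℝ => t * Real.log t ^ 2)
      (1 * Real.log t ^ 2 + t * (2 * Real.log t ^ 1 * t⁻¹)) t := by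
    have hlog2 : HasDerivAt (fun t : ℝ => Real.log t ^ 2)
        ((2 : ℕ) * Real.log t ^ (2 - 1) * t⁻¹) t :=
      (Real.hasDerivAt_log ht.ne').fun_pow 2
    have this : HasDerivAt (fun t : ℝ => t * Real.log t ^ 2) _ t :=
      (hasDerivAt_id t).fun_mul hlog2
    convert this using 1
    norm_num
  have hQ : HasDerivAt (fun t : ℝ => 2 / (t * Real.log t ^ 2))
      ((0 * (t * Real.log t ^ 2) - 2 * (1 * Real.log t ^ 2 + t * (2 * Real.log t ^ 1 * t⁻¹)))
        / (t * Real.log t ^ 2) ^ 2) t :=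
    (hasDerivAt_const t (2 : ℝ)).div hu (mul_ne_zero ht.ne' (pow_ne_zero 2 hL))
  have h1 : HasDerivAt (fun t : ℝ => b * t ^ (b - 1) * (1 + (-(Real.log t / 2))⁻¹))
      ((b * ((b - 1) * t ^ (b - 1 - 1))) * (1 + (-(Real.log t / 2))⁻¹)
        + (b * t ^ (b - 1)) * (-(-(t⁻¹ / 2)) / (-(Real.log t / 2)) ^ 2)) t :=
    ((Real.hasDerivAt_rpow_const (p := b - 1) (Or.inl ht.ne')).const_mul b).mul hP
  have h2 : HasDerivAt (fun t : ℝ => t ^ b * (2 / (t * Real.log t ^ 2)))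
      ((b * t ^ (b - 1)) * (2 / (t * Real.log t ^ 2))
        + t ^ b * ((0 * (t * Real.log t ^ 2)
          - 2 * (1 * Real.log t ^ 2 + t * (2 * Real.log t ^ 1 * t⁻¹)))
            / (t * Real.log t ^ 2) ^ 2)) t :=
    (Real.hasDerivAt_rpow_const (p := b) (Or.inl ht.ne')).mul hQ
  have this : HasDerivAt (fun t : ℝ => b * t ^ (b - 1) * (1 + (-(Real.log t / 2))⁻¹)
      + t ^ b * (2 / (t * Real.log t ^ 2))) _ t :=
    h1.fun_add h2
  convert this using 1
  · rfl
  rw [hh2]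
  have hb2 : b - 1 - 1 = b - 2 := by ring
  rw [← hb2]
  field_simp
  ring

lemma hh_pointwise (m : ℕ) {N : ℕ} (b : ℝ) (x : EuclideanSpace ℝ (Fin N)) :
    rhoY m x ^ (2 * b) * (1 + (-Real.log (rhoY m x))⁻¹) = hh b (sQ m x) := by
  rw [rhoY_eq, hh, Real.log_sqrt (sQ_nonneg m x),
    ← Real.rpow_div_two_eq_sqrt (2 * b) (sQ_nonneg m x)]
  norm_num

lemma TT_apply_single (m : ℕ) {N : ℕ} (x : EuclideanSpace ℝ (Fin N)) (i : Fin N) :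
    TT m x (EuclideanSpace.single i 1) = if (i : ℕ) < m then 2 * x i else 0 := by
  simp only [TT, ContinuousLinearMap.sum_apply, ContinuousLinearMap.smulRight_apply,
    ContinuousLinearMap.smul_apply, smul_eq_mul, PiLp.proj_apply,
    EuclideanSpace.single_apply]
  rw [Finset.sum_congr rfl (fun j _ => by
    rw [show (2 * x j * if j = i then (1:ℝ) else 0) = if j = i then 2 * x j else 0 from by
      split_ifs <;> ring])]
  simp [Finset.sum_ite_eq']

lemma TT_single_single (m : ℕ) {N : ℕ} (i : Fin N) :
    TT m (EuclideanSpace.single i 1) (EuclideanSpace.single i 1)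
      = if (i : ℕ) < m then 2 else 0 := by
  simp only [TT, ContinuousLinearMap.sum_apply, ContinuousLinearMap.smulRight_apply,
    ContinuousLinearMap.smul_apply, smul_eq_mul, PiLp.proj_apply,
    EuclideanSpace.single_apply]
  rw [Finset.sum_congr rfl (fun j _ => by
    rw [show (2 * (if j = i then (1:ℝ) else 0) * if j = i then (1:ℝ) else 0)
        = if j = i then 2 else 0 from by split_ifs <;> ring])]
  simp [Finset.sum_ite_eq']

lemma sum_ite_const {N m : ℕ} (hmN : m ≤ N) (c : ℝ) :
    ∑ i : Fin N, (if (i : ℕ) < m then c else 0) = m * c := by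
  rw [Fin.sum_univ_eq_sum_range (fun i => if i < m then c else 0) N, ← Finset.sum_filter]
  have : (Finset.range N).filter (fun i => i < m) = Finset.range m := by
    ext a; simp; omega
  rw [this, Finset.sum_const, Finset.card_range, nsmul_eq_mul]

lemma lap_eq {N : ℕ} (m : ℕ) (hmN : m ≤ N) (b : ℝ) (x : EuclideanSpace ℝ (Fin N))
    (h0 : 0 < sQ m x) (h1x : sQ m x < 1) :
    lap (fun y => hh b (sQ m y)) x
      = 4 * sQ m x * hh2 b (sQ m x) + 2 * m * hh1 b (sQ m x) := by
  have hU : IsOpen {y : EuclideanSpace ℝ (Fin N) | 0 < sQ m y ∧ sQ m y < 1} := by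
    have h : {y : EuclideanSpace ℝ (Fin N) | 0 < sQ m y ∧ sQ m y < 1}
        = sQ m ⁻¹' (Set.Ioo 0 1) := rfl
    rw [h]
    exact isOpen_Ioo.preimage (sQ_continuous m)
  have hfd : ∀ y ∈ {y : EuclideanSpace ℝ (Fin N) | 0 < sQ m y ∧ sQ m y < 1},
      HasFDerivAt (fun z => hh b (sQ m z)) (hh1 b (sQ m y) • TT m y) y := fun y hy =>
    (hasDerivAt_hh b _ hy.1 hy.2).comp_hasFDerivAt y (hasFDerivAt_sQ m y)
  have hmem : x ∈ {y : EuclideanSpace ℝ (Fin N) | 0 < sQ m y ∧ sQ m y < 1} := ⟨h0, h1x⟩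
  have hev : fderiv ℝ (fun z => hh b (sQ m z)) =ᶠ[nhds x]
      (fun y => hh1 b (sQ m y) • TT m y) :=
    Filter.eventually_of_mem (hU.mem_nhds hmem) fun y hy => (hfd y hy).fderiv
  have hc : HasFDerivAt (fun y => hh1 b (sQ m y) • TT m y)
      ((hh1 b (sQ m x)) • (TT m) + (hh2 b (sQ m x) • TT m x).smulRight (TT m x)) x := by
    have hg1 : HasFDerivAt (fun y => hh1 b (sQ m y)) (hh2 b (sQ m x) • TT m x) x :=
      (hasDerivAt_hh1 b _ h0 h1x).comp_hasFDerivAt x (hasFDerivAt_sQ m x)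
    have hg2 : HasFDerivAt (fun y : EuclideanSpace ℝ (Fin N) => TT m y) (TT m) x :=
      (TT m).hasFDerivAt
    exact hg1.smul hg2
  have key : fderiv ℝ (fderiv ℝ (fun z => hh b (sQ m z))) x
      = (hh1 b (sQ m x)) • (TT m) + (hh2 b (sQ m x) • TT m x).smulRight (TT m x) := by
    rw [hev.fderiv_eq, hc.fderiv]
  simp only [lap, iteratedFDeriv_two_apply, Matrix.cons_val_zero, Matrix.cons_val_one,
    Matrix.head_cons, key]
  simp only [ContinuousLinearMap.add_apply, ContinuousLinearMap.smul_apply,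
    ContinuousLinearMap.smulRight_apply, smul_eq_mul, TT_single_single]
  simp only [TT_apply_single]
  rw [Finset.sum_add_distrib]
  have S1 : ∑ i : Fin N, hh1 b (sQ m x) * (if (i : ℕ) < m then (2:ℝ) else 0)
      = 2 * m * hh1 b (sQ m x) := by
    rw [← Finset.mul_sum, sum_ite_const hmN]
    ring
  have S2 : ∑ i : Fin N, (hh2 b (sQ m x) * (if (i : ℕ) < m then 2 * x i else 0))
        * (if (i : ℕ) < m then 2 * x i else 0)
      = 4 * sQ m x * hh2 b (sQ m x) := by
    rw [Finset.sum_congr rfl (fun i _ => by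
      rw [show (hh2 b (sQ m x) * (if (i : ℕ) < m then 2 * x i else 0))
            * (if (i : ℕ) < m then 2 * x i else 0)
          = 4 * hh2 b (sQ m x) * (if (i : ℕ) < m then x i ^ 2 else 0) from by
        split_ifs <;> ring])]
    rw [← Finset.mul_sum]
    rw [show (∑ i : Fin N, if (i : ℕ) < m then x i ^ 2 else 0) = sQ m x from rfl]
    ring
  rw [S1, S2]
  ring

lemma final_alg (mR t b : ℝ) (hb : b = (2 - mR) / 4) (ht : 0 < t) (ht1 : t < 1) :
    -(4 * t * hh2 b t + 2 * mR * hh1 b t) - ((mR - 2) / 2) ^ 2 * hh b t / t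
      = -(2 * ((-(Real.log t / 2))⁻¹) ^ 3 * t ^ b / t) := by
  have hL : Real.log t ≠ 0 := log_ne t ht ht1
  have hb1 : t ^ (b - 1) = t ^ b / t := by rw [Real.rpow_sub ht, Real.rpow_one]
  have hb2 : t ^ (b - 2) = t ^ b / t ^ 2 := by
    rw [Real.rpow_sub ht, show (2:ℝ) = ((2:ℕ):ℝ) by norm_num, Real.rpow_natCast]
  have hinv : (-(Real.log t / 2))⁻¹ = -(2 / Real.log t) := by
    rw [inv_neg, inv_div]
  simp only [hh, hh1, hh2, hb1, hb2, hinv]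
  have ht' : t ≠ 0 := ht.ne'
  generalize t ^ b = A
  rw [hb]
  field_simp
  ring

end CHSaux

open CHSaux in
/-- The subsolution `V = v₋₁ + v₀`, i.e.
`V(y,z) = ‖y‖^{(2+k-N)/2} (1 + (-log ‖y‖)⁻¹)`, of the critical Hardy operator:
`V > 0` on `Ω = {0 < ‖y‖ < 1}` and there
`-ΔV - ((N-k-2)/2)² ‖y‖⁻² V = -2 ‖y‖⁻² (-log ‖y‖)⁻³ ‖y‖^{(2+k-N)/2} ≤ 0`. -/
theorem critical_hardy_subsolution (N k m : ℕ) (hN : 3 ≤ N) (hk1 : 1 ≤ k)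
    (hk2 : k ≤ N - 2) (hm : m = N - k) :
    (∀ x : EuclideanSpace ℝ (Fin N), 0 < rhoY m x → rhoY m x < 1 →
      0 < rhoY m x ^ (((2 : ℝ) + k - N) / 2) * (1 + (-Real.log (rhoY m x))⁻¹)) ∧
    (∀ x : EuclideanSpace ℝ (Fin N), 0 < rhoY m x → rhoY m x < 1 →
      -lap (fun x : EuclideanSpace ℝ (Fin N) =>
            rhoY m x ^ (((2 : ℝ) + k - N) / 2) * (1 + (-Real.log (rhoY m x))⁻¹)) x
        - (((N : ℝ) - k - 2) / 2) ^ 2 *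
            (rhoY m x ^ (((2 : ℝ) + k - N) / 2) * (1 + (-Real.log (rhoY m x))⁻¹))
              / (rhoY m x) ^ 2 =
        -(2 * ((-Real.log (rhoY m x))⁻¹) ^ 3 * rhoY m x ^ (((2 : ℝ) + k - N) / 2)
          / (rhoY m x) ^ 2) ∧
      -(2 * ((-Real.log (rhoY m x))⁻¹) ^ 3 * rhoY m x ^ (((2 : ℝ) + k - N) / 2)
          / (rhoY m x) ^ 2) ≤ 0) := by
  have hkN : k ≤ N := le_trans hk2 (Nat.sub_le N 2)
  have hmR : (m : ℝ) = (N : ℝ) - k := by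
    rw [hm, Nat.cast_sub hkN]
  have hmN : m ≤ N := by omega
  constructor
  · intro x hρ hρ1
    have hlog : Real.log (rhoY m x) < 0 := Real.log_neg hρ hρ1
    have h1 : 0 < 1 + (-Real.log (rhoY m x))⁻¹ := by
      have : 0 < (-Real.log (rhoY m x))⁻¹ := inv_pos.2 (by linarith)
      linarith
    exact mul_pos (Real.rpow_pos_of_pos hρ _) h1
  · intro x hρ hρ1
    have hlog : Real.log (rhoY m x) < 0 := Real.log_neg hρ hρ1
    constructor
    · -- the identity
      set b : ℝ := ((2 : ℝ) + k - N) / 2 / 2 with hbdef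
      have hb : b = (2 - (m : ℝ)) / 4 := by rw [hbdef, hmR]; ring
      have ht0 : 0 < sQ m x := Real.sqrt_pos.mp hρ
      have ht1 : sQ m x < 1 := by
        nlinarith [Real.sq_sqrt (sQ_nonneg m x), hρ, hρ1, rhoY_eq m x]
      have hexp : ((2 : ℝ) + k - N) / 2 = 2 * b := by rw [hbdef]; ring
      have hfun : (fun x : EuclideanSpace ℝ (Fin N) =>
          rhoY m x ^ (((2 : ℝ) + k - N) / 2) * (1 + (-Real.log (rhoY m x))⁻¹))
            = fun x => hh b (sQ m x) := by
        funext y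
        rw [hexp, hh_pointwise]
      have hpow : rhoY m x ^ (((2 : ℝ) + k - N) / 2) * (1 + (-Real.log (rhoY m x))⁻¹)
          = hh b (sQ m x) := by rw [hexp, hh_pointwise]
      have hpow2 : rhoY m x ^ (((2 : ℝ) + k - N) / 2) = sQ m x ^ b := by
        rw [hexp, rhoY_eq, ← Real.rpow_div_two_eq_sqrt (2 * b) (sQ_nonneg m x)]
        norm_num
      have hlogρ : Real.log (rhoY m x) = Real.log (sQ m x) / 2 := by
        rw [rhoY_eq]; exact Real.log_sqrt (sQ_nonneg m x)
      have hsq : rhoY m x ^ 2 = sQ m x := by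
        rw [rhoY_eq]; exact Real.sq_sqrt (sQ_nonneg m x)
      rw [hfun, lap_eq m hmN b x ht0 ht1, hpow, hpow2, hlogρ, hsq]
      rw [show ((N : ℝ) - k - 2) = ((m : ℝ) - 2) by rw [hmR]]
      rw [show (-(Real.log (sQ m x) / 2)) = -Real.log (sQ m x) / 2 by ring] at *
      have := final_alg (m : ℝ) (sQ m x) b hb ht0 ht1
      rw [show (-(Real.log (sQ m x) / 2)) = -Real.log (sQ m x) / 2 by ring] at this
      convert this using 3 <;> push_cast <;> ring
    · -- the sign
      have h1 : 0 ≤ (-Real.log (rhoY m x))⁻¹ := inv_nonneg.2 (by linarith)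
      apply neg_nonpos_of_nonneg
      apply div_nonneg
      · apply mul_nonneg
        · apply mul_nonneg (by norm_num)
          exact pow_nonneg h1 3
        · exact Real.rpow_nonneg hρ.le _
      · positivity
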